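/- Let G be a graph, M a maximum matching of G witnessed by the Tutte–Berge formula, and let S* be a set of maximum cardinality achieving the minimum of n + |S| − o(G−S) over all S ⊆ V(G). Then every odd component of G − S* that is a tree consists of a single vertex. -/

import Mathlib

open SimpleGraph

lemma exists_leaf {α : Type*} [Fintype α] (T : SimpleGraph α) (hT : T.IsTree)
    (h2 : 1 < Fintype.card α) : ∃ u v, T.Adj u v ∧ ∀ w, T.Adj u w → w = v := by
  classical
  have hdeg1 : ∀ x : α, 0 < T.degree x := by
    intro x
    obtain ⟨y, hy⟩ := Fintype.exists_ne_of_one_lt_card h2 x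
    obtain ⟨p⟩ := hT.isConnected.preconnected x y
    rw [T.degree_pos_iff_exists_adj]
    cases p with
    | nil => exact absurd rfl hy.symm
    | cons h q => exact ⟨_, h⟩
  have hedge : Finset.card T.edgeFinset + 1 = Fintype.card α := hT.card_edgeFinset
  have hsum : ∑ v, T.degree v = 2 * T.edgeFinset.card := T.sum_degrees_eq_twice_card_edges
  have : ∃ u : α, T.degree u = 1 := by
    by_contra hno
    push_neg at hno
    have h2le : ∀ x : α, 2 ≤ T.degree x := by
      intro x; have := hdeg1 x; have := hno x; omega
    have : 2 * Fintype.card α ≤ ∑ v, T.degree v := by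
      calc 2 * Fintype.card α = ∑ _v : α, 2 := by simp [Finset.sum_const, mul_comm]
        _ ≤ ∑ v, T.degree v := Finset.sum_le_sum fun i _ => h2le i
    omega
  obtain ⟨u, hu⟩ := this
  obtain ⟨v, hv⟩ := Finset.card_eq_one.mp (by rwa [SimpleGraph.degree] at hu)
  refine ⟨u, v, ?_, ?_⟩
  · have : v ∈ T.neighborFinset u := by rw [hv]; exact Finset.mem_singleton_self v
    rwa [T.mem_neighborFinset] at this
  · intro w hw
    have : w ∈ T.neighborFinset u := by rwa [T.mem_neighborFinset]
    rw [hv] at this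
    exact Finset.mem_singleton.mp this

lemma walk_lift {α : Type*} (G : SimpleGraph α) (W W' : Set α) :
    ∀ {a b : W} (p : (G.induce W).Walk a b), (∀ y ∈ p.support, (y : α) ∈ W') →
    ∀ (ha : ↑a ∈ W') (hb : ↑b ∈ W'), (G.induce W').Reachable ⟨↑a, ha⟩ ⟨↑b, hb⟩ := by
  intro a b p
  induction p with
  | nil => intro _ ha hb; rfl
  | @cons x y z h q ih =>
    intro hsupp ha hb
    have hy : (y : α) ∈ W' := hsupp y (by simp [Walk.support_cons])
    have hadj : (G.induce W').Adj ⟨↑x, ha⟩ ⟨↑y, hy⟩ := by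
      simp only [comap_adj, Function.Embedding.coe_subtype] at h ⊢
      exact h
    exact hadj.reachable.trans (ih (fun t ht => hsupp t (by simp [Walk.support_cons, ht])) hy hb)

/-- The number of odd connected components of a graph. -/
noncomputable def oddComp {W : Type*} (H : SimpleGraph W) : ℕ :=
  {c : H.ConnectedComponent | Odd c.supp.ncard}.ncard

theorem stmt1 {V : Type*} [Fintype V] (G : SimpleGraph V) (M : G.Subgraph)
    (hM : M.IsMatching)
    (hMmax : ∀ M' : G.Subgraph, M'.IsMatching → M'.edgeSet.ncard ≤ M.edgeSet.ncard)
    (S : Set V)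
    (hwitness : 2 * (M.edgeSet.ncard : ℤ) =
      (Fintype.card V : ℤ) + S.ncard - oddComp (G.induce (Sᶜ : Set V)))
    (hmin : ∀ T : Set V,
      (Fintype.card V : ℤ) + S.ncard - oddComp (G.induce (Sᶜ : Set V)) ≤
      (Fintype.card V : ℤ) + T.ncard - oddComp (G.induce (Tᶜ : Set V)))
    (hmax : ∀ T : Set V,
      ((Fintype.card V : ℤ) + T.ncard - oddComp (G.induce (Tᶜ : Set V)) =
       (Fintype.card V : ℤ) + S.ncard - oddComp (G.induce (Sᶜ : Set V))) →
      T.ncard ≤ S.ncard) :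
    ∀ c : (G.induce (Sᶜ : Set V)).ConnectedComponent,
      Odd c.supp.ncard → ((G.induce (Sᶜ : Set V)).induce c.supp).IsTree →
      c.supp.ncard = 1 := by
  classical
  intro c hodd htree
  by_contra hne1
  have h2 : 1 < c.supp.ncard := by
    rcases hodd with ⟨k, hk⟩; omega
  -- get a leaf of the tree
  letI : Fintype ↥(c.supp) := Fintype.ofFinite _
  have hcard : Fintype.card ↥(c.supp) = c.supp.ncard := by
    rw [← Nat.card_coe_set_eq, Nat.card_eq_fintype_card]
  obtain ⟨u, v, huv, hunique⟩ := exists_leaf _ htree (by rwa [hcard])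
  -- basic adjacency facts in G.induce Sᶜ
  have hadj : (G.induce (Sᶜ : Set V)).Adj ↑u ↑v := huv
  have hmkuc : (G.induce (Sᶜ : Set V)).connectedComponentMk ↑u = c :=
    (ConnectedComponent.mem_supp_iff _ _).mp u.2
  have hmkvc : (G.induce (Sᶜ : Set V)).connectedComponentMk ↑v = c :=
    (ConnectedComponent.mem_supp_iff _ _).mp v.2
  have hstar : ∀ w : ↥(Sᶜ : Set V), (G.induce (Sᶜ : Set V)).Adj ↑u w → w = ↑v := by
    intro w hw
    have hwc : w ∈ c.supp := by
      rw [ConnectedComponent.mem_supp_iff, ← hmkuc]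
      exact ConnectedComponent.connectedComponentMk_eq_of_adj hw.symm
    have hKadj : ((G.induce (Sᶜ : Set V)).induce c.supp).Adj u ⟨w, hwc⟩ := hw
    exact congrArg Subtype.val (hunique _ hKadj)
  set vV : V := ((v : ↥(Sᶜ : Set V)) : V) with hvVdef
  set uV : V := ((u : ↥(Sᶜ : Set V)) : V) with huVdef
  have hne_uv : uV ≠ vV := fun h => (hadj.ne) (Subtype.val_injective h)
  have hvS : vV ∈ (Sᶜ : Set V) := (v : ↥(Sᶜ : Set V)).2
  set T : Set V := insert vV S with hTdef
  have hTc : (Tᶜ : Set V) = (Sᶜ : Set V) \ {vV} := by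
    rw [hTdef]
    ext x
    simp only [Set.mem_compl_iff, Set.mem_insert_iff, Set.mem_diff, Set.mem_singleton_iff]
    tauto
  have hTsub : (Tᶜ : Set V) ⊆ (Sᶜ : Set V) := by rw [hTc]; exact Set.diff_subset
  have hmemTc : ∀ x : V, x ∈ (Tᶜ : Set V) ↔ x ∈ (Sᶜ : Set V) ∧ x ≠ vV := by
    intro x; rw [hTc]; simp [Set.mem_diff]
  -- the embedding and the induced map on components
  set f : G.induce (Tᶜ : Set V) ↪g G.induce (Sᶜ : Set V) := G.induceHomOfLE hTsub with hfdef
  set φ : (G.induce (Tᶜ : Set V)).ConnectedComponent → (G.induce (Sᶜ : Set V)).ConnectedComponent :=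
    ConnectedComponent.map f.toHom with hφdef
  have hfval : ∀ x : ↥(Tᶜ : Set V), ((f x : ↥(Sᶜ : Set V)) : V) = ↑x := fun _ => rfl
  have hφmk : ∀ x : ↥(Tᶜ : Set V),
      φ ((G.induce (Tᶜ : Set V)).connectedComponentMk x)
        = (G.induce (Sᶜ : Set V)).connectedComponentMk (f x) := fun x => rfl
  -- membership in Tᶜ for vertices not in component c
  have hmem' : ∀ w : ↥(Sᶜ : Set V), (G.induce (Sᶜ : Set V)).connectedComponentMk w ≠ c →
      (↑w : V) ∈ (Tᶜ : Set V) := by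
    intro w hwc
    rw [hmemTc]
    refine ⟨w.2, fun h => hwc ?_⟩
    have : w = (v : ↥(Sᶜ : Set V)) := Subtype.val_injective h
    rw [this]; exact hmkvc
  -- key reachability transfer
  have hkey : ∀ (w y : ↥(Sᶜ : Set V)) (hw : ↑w ∈ (Tᶜ : Set V)) (hy : ↑y ∈ (Tᶜ : Set V)),
      (G.induce (Sᶜ : Set V)).connectedComponentMk w ≠ c →
      (G.induce (Sᶜ : Set V)).Reachable w y →
      (G.induce (Tᶜ : Set V)).Reachable ⟨↑w, hw⟩ ⟨↑y, hy⟩ := by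
    intro w y hw hy hwc hr
    obtain ⟨p⟩ := hr
    refine walk_lift G (Sᶜ : Set V) (Tᶜ : Set V) p ?_ hw hy
    intro z hz
    obtain ⟨q, r, _⟩ := Walk.mem_support_iff_exists_append.mp hz
    refine hmem' z fun hzc => hwc ?_
    rw [← hzc]
    exact ConnectedComponent.eq.mpr ⟨q⟩
  -- the component of u in G.induce Tᶜ is a singleton
  have huT : uV ∈ (Tᶜ : Set V) := by rw [hmemTc]; exact ⟨(u : ↥(Sᶜ : Set V)).2, hne_uv⟩
  set u' : ↥(Tᶜ : Set V) := ⟨uV, huT⟩ with hu'def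
  set d_u : (G.induce (Tᶜ : Set V)).ConnectedComponent :=
    (G.induce (Tᶜ : Set V)).connectedComponentMk u' with hdudef
  have hfu' : f u' = (u : ↥(Sᶜ : Set V)) := Subtype.val_injective rfl
  have hφdu : φ d_u = c := by rw [hdudef, hφmk, hfu', hmkuc]
  have hdusupp : d_u.supp = {u'} := by
    ext x
    simp only [ConnectedComponent.mem_supp_iff, Set.mem_singleton_iff, hdudef]
    constructor
    · intro hx
      obtain ⟨p⟩ := ConnectedComponent.eq.mp hx.symm
      cases p with
      | nil => rfl
      | @cons _ z _ h q =>
        exfalso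
        have hzS : (↑z : V) ∈ (Sᶜ : Set V) := hTsub z.2
        have : (G.induce (Sᶜ : Set V)).Adj ↑u ⟨↑z, hzS⟩ := h
        have hz := hstar _ this
        have : (↑z : V) = vV := congrArg Subtype.val hz
        exact ((hmemTc ↑z).mp z.2).2 this
    · rintro rfl; rfl
  have hduodd : Odd d_u.supp.ncard := by rw [hdusupp, Set.ncard_singleton]; exact odd_one
  -- finiteness instances
  haveI : Finite ((G.induce (Tᶜ : Set V)).ConnectedComponent) :=
    Finite.of_surjective _ (fun d => d.exists_rep)
  haveI : Finite ((G.induce (Sᶜ : Set V)).ConnectedComponent) :=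
    Finite.of_surjective _ (fun d => d.exists_rep)
  letI : Fintype ((G.induce (Tᶜ : Set V)).ConnectedComponent) := Fintype.ofFinite _
  letI : Fintype ↥(Tᶜ : Set V) := Fintype.ofFinite _
  -- construction of ψ : for each odd component of G - S, an odd component of G - T over it
  have hψex : ∀ d : (G.induce (Sᶜ : Set V)).ConnectedComponent,
      ∃ d' : (G.induce (Tᶜ : Set V)).ConnectedComponent,
        (Odd d.supp.ncard → Odd d'.supp.ncard ∧ φ d' = d) ∧ (d = c → d' = d_u) := by
    intro d
    by_cases hdc : d = c
    · exact ⟨d_u, fun _ => ⟨hduodd, by rw [hφdu, hdc]⟩, fun _ => rfl⟩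
    · obtain ⟨w, hw⟩ := d.exists_rep
      have hw : (G.induce (Sᶜ : Set V)).connectedComponentMk w = d := hw
      have hwne : (G.induce (Sᶜ : Set V)).connectedComponentMk w ≠ c := by rw [hw]; exact hdc
      have hwT : (↑w : V) ∈ (Tᶜ : Set V) := hmem' w hwne
      set w' : ↥(Tᶜ : Set V) := ⟨↑w, hwT⟩ with hw'def
      set d' : (G.induce (Tᶜ : Set V)).ConnectedComponent :=
        (G.induce (Tᶜ : Set V)).connectedComponentMk w' with hd'def
      have hfw' : f w' = w := Subtype.val_injective rfl
      have hφd' : φ d' = d := by rw [hd'def, hφmk, hfw', hw]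
      refine ⟨d', fun _ => ⟨?_, hφd'⟩, fun h => absurd h hdc⟩
      -- supports have the same image in V
      have himg : Subtype.val '' d'.supp = Subtype.val '' d.supp := by
        ext x
        constructor
        · rintro ⟨z, hz, rfl⟩
          refine ⟨f z, ?_, rfl⟩
          rw [ConnectedComponent.mem_supp_iff] at hz ⊢
          rw [← hφd', ← hz]
          exact (hφmk z).symm
        · rintro ⟨y, hy, rfl⟩
          rw [ConnectedComponent.mem_supp_iff] at hy
          have hyT : (↑y : V) ∈ (Tᶜ : Set V) := hmem' y (by rw [hy]; exact hdc)
          have hr : (G.induce (Sᶜ : Set V)).Reachable w y :=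
            ConnectedComponent.eq.mp (hw.trans hy.symm)
          have := hkey w y hwT hyT hwne hr
          refine ⟨⟨↑y, hyT⟩, ?_, rfl⟩
          rw [ConnectedComponent.mem_supp_iff, hd'def]
          exact (ConnectedComponent.eq.mpr this).symm
      have : d'.supp.ncard = d.supp.ncard := by
        rw [← Set.ncard_image_of_injective d'.supp Subtype.val_injective,
          ← Set.ncard_image_of_injective d.supp Subtype.val_injective, himg]
      rw [this]; assumption
  choose ψ hψ1 hψ2 using hψex
  -- counting vertices of c other than v, fiberwise over components of G - T
  set P : Finset ↥(Tᶜ : Set V) :=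
    Finset.univ.filter (fun x => φ ((G.induce (Tᶜ : Set V)).connectedComponentMk x) = c)
    with hPdef
  set Φ : Finset ((G.induce (Tᶜ : Set V)).ConnectedComponent) :=
    Finset.univ.filter (fun d' => φ d' = c) with hΦdef
  have hPsum : P.card = ∑ d' ∈ Φ, (P.filter
      (fun x => (G.induce (Tᶜ : Set V)).connectedComponentMk x = d')).card := by
    refine Finset.card_eq_sum_card_fiberwise ?_
    intro x hx
    simp only [hPdef, Finset.mem_coe, Finset.mem_filter] at hx
    simp only [hΦdef, Finset.mem_coe, Finset.mem_filter]
    exact ⟨Finset.mem_univ _, hx.2⟩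
  have hfiber : ∀ d' ∈ Φ, (P.filter
      (fun x => (G.induce (Tᶜ : Set V)).connectedComponentMk x = d')).card
      = d'.supp.ncard := by
    intro d' hd'
    rw [hΦdef, Finset.mem_filter] at hd'
    rw [Set.ncard_eq_toFinset_card']
    congr 1
    ext x
    simp only [Finset.mem_filter, hPdef, Finset.mem_univ, true_and, Set.mem_toFinset,
      ConnectedComponent.mem_supp_iff]
    constructor
    · exact fun h => h.2
    · intro h; exact ⟨by rw [h]; exact hd'.2, h⟩
  have hPsum' : P.card = ∑ d' ∈ Φ, d'.supp.ncard := by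
    rw [hPsum]; exact Finset.sum_congr rfl hfiber
  -- P.card = c.supp.ncard - 1
  have hfinj : Function.Injective (fun x : ↥(Tᶜ : Set V) => (f x : ↥(Sᶜ : Set V))) :=
    f.injective
  have himage : c.supp.toFinset
      = insert (v : ↥(Sᶜ : Set V)) (P.image (fun x => (f x : ↥(Sᶜ : Set V)))) := by
    ext z
    simp only [Set.mem_toFinset, Finset.mem_insert, Finset.mem_image]
    constructor
    · intro hz
      rw [ConnectedComponent.mem_supp_iff] at hz
      by_cases hzv : z = (v : ↥(Sᶜ : Set V))
      · exact Or.inl hzv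
      · refine Or.inr ?_
        have hzT : (↑z : V) ∈ (Tᶜ : Set V) := by
          rw [hmemTc]
          exact ⟨z.2, fun h => hzv (Subtype.val_injective h)⟩
        refine ⟨⟨↑z, hzT⟩, ?_, Subtype.val_injective rfl⟩
        rw [hPdef, Finset.mem_filter]
        refine ⟨Finset.mem_univ _, ?_⟩
        rw [hφmk]
        have : f (⟨↑z, hzT⟩ : ↥(Tᶜ : Set V)) = z := Subtype.val_injective rfl
        rw [this, hz]
    · rintro (rfl | ⟨x, hx, rfl⟩)
      · exact v.2
      · rw [hPdef, Finset.mem_filter, hφmk] at hx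
        rw [ConnectedComponent.mem_supp_iff]
        exact hx.2
  have hvnotin : (v : ↥(Sᶜ : Set V)) ∉ P.image (fun x => (f x : ↥(Sᶜ : Set V))) := by
    rw [Finset.mem_image]
    rintro ⟨x, _, hx⟩
    have : (↑x : V) = vV := congrArg Subtype.val hx
    exact ((hmemTc ↑x).mp x.2).2 this
  have hPcard : c.supp.ncard = P.card + 1 := by
    rw [Set.ncard_eq_toFinset_card', himage, Finset.card_insert_of_notMem hvnotin,
      Finset.card_image_of_injective _ hfinj]
  -- d_u belongs to Φ
  have hduΦ : d_u ∈ Φ := by rw [hΦdef, Finset.mem_filter]; exact ⟨Finset.mem_univ _, hφdu⟩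
  -- existence of a second odd component in the fiber over c
  have hd0 : ∃ d₀ ∈ Φ, d₀ ≠ d_u ∧ Odd d₀.supp.ncard := by
    by_contra hno
    push_neg at hno
    have heven : ∀ d' ∈ Φ.erase d_u, Even d'.supp.ncard := by
      intro d' hd'
      have h1 := Finset.mem_of_mem_erase hd'
      have h2 := Finset.ne_of_mem_erase hd'
      exact Nat.not_odd_iff_even.mp (hno d' h1 h2)
    have hsplit : ∑ d' ∈ Φ, d'.supp.ncard
        = d_u.supp.ncard + ∑ d' ∈ Φ.erase d_u, d'.supp.ncard :=
      (Finset.add_sum_erase _ _ hduΦ).symm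
    have hsum : P.card = d_u.supp.ncard + ∑ d' ∈ Φ.erase d_u, d'.supp.ncard := by
      rw [hPsum', hsplit]
    have hEs : Even (∑ d' ∈ Φ.erase d_u, d'.supp.ncard) := Finset.even_sum _ heven
    have hd1 : d_u.supp.ncard = 1 := by rw [hdusupp, Set.ncard_singleton]
    rw [hd1] at hsum
    obtain ⟨k, hk⟩ := hEs
    obtain ⟨m, hm⟩ := hodd
    omega
  obtain ⟨d₀, hd₀Φ, hd₀ne, hd₀odd⟩ := hd0
  have hφd₀ : φ d₀ = c := by rw [hΦdef, Finset.mem_filter] at hd₀Φ; exact hd₀Φ.2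
  -- counting odd components
  set A : Set ((G.induce (Sᶜ : Set V)).ConnectedComponent) := {d | Odd d.supp.ncard} with hAdef
  set B : Set ((G.induce (Tᶜ : Set V)).ConnectedComponent) := {d | Odd d.supp.ncard} with hBdef
  have hsubset : insert d₀ (ψ '' A) ⊆ B := by
    rintro x (rfl | ⟨d, hd, rfl⟩)
    · exact hd₀odd
    · exact (hψ1 d hd).1
  have hnotmem : d₀ ∉ ψ '' A := by
    rintro ⟨d, hd, rfl⟩
    by_cases hdc : d = c
    · exact hd₀ne (by rw [← hψ2 d hdc, hdc])
    · exact hdc (by rw [← (hψ1 d hd).2, hφd₀])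
  have hinjA : Set.InjOn ψ A := by
    intro d₁ h₁ d₂ h₂ h
    rw [← (hψ1 d₁ h₁).2, ← (hψ1 d₂ h₂).2, h]
  have hcount : A.ncard + 1 ≤ B.ncard := by
    calc A.ncard + 1 = (ψ '' A).ncard + 1 := by rw [Set.ncard_image_of_injOn hinjA]
      _ = (insert d₀ (ψ '' A)).ncard := (Set.ncard_insert_of_notMem hnotmem (Set.toFinite _)).symm
      _ ≤ B.ncard := Set.ncard_le_ncard hsubset (Set.toFinite _)
  have hoddS : oddComp (G.induce (Sᶜ : Set V)) = A.ncard := rfl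
  have hoddT : oddComp (G.induce (Tᶜ : Set V)) = B.ncard := rfl
  -- final arithmetic
  have hTn : T.ncard = S.ncard + 1 := by
    rw [hTdef]
    exact Set.ncard_insert_of_notMem (by simpa using hvS) (Set.toFinite _)
  have hkey2 : (Fintype.card V : ℤ) + T.ncard - oddComp (G.induce (Tᶜ : Set V)) =
      (Fintype.card V : ℤ) + S.ncard - oddComp (G.induce (Sᶜ : Set V)) := by
    have h1 := hmin T
    have hc : (oddComp (G.induce (Sᶜ : Set V)) : ℤ) + 1 ≤ oddComp (G.induce (Tᶜ : Set V)) := by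
      rw [hoddS, hoddT]
      exact_mod_cast hcount
    have hTn' : (T.ncard : ℤ) = (S.ncard : ℤ) + 1 := by exact_mod_cast hTn
    linarith
  have hle := hmax T hkey2
  omega
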